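/- Let u^{k+1} = (1-τ)u^k + τG + Jᵀ(v^{k+1} - v^k) be an update with f Lipschitz-smooth (∇f is L_{∇f}-Lipschitz) and f L_f-Lipschitz. Define Δ_G = f(v^k) - G, Δ_J = ∇f(v^k) - J, e = f(v^{k+1}) - f(v^k) - ⟨∇f(v^k), v^{k+1} - v^k⟩. Then ‖f(v^{k+1}) - u^{k+1}‖² ≤ (1-τ)‖f(v^k) - u^k‖² + τ²‖Δ_G‖² + [4L_f² + L_{∇f}‖f(v^k) - u^k‖ + ‖Δ_J‖²]·‖v^{k+1} - v^k‖² + r, where r = 2τ⟨Δ_G, e + (1-τ)(f(v^k) - u^k) + Δ_Jᵀ(v^{k+1} - v^k)⟩ + 2⟨Δ_Jᵀ(v^{k+1} - v^k), e + (1-τ)(f(v^k) - u^k)⟩. -/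

import Mathlib

open scoped RealInnerProductSpace BigOperators

noncomputable section

lemma taylor_half {E F : Type*} [NormedAddCommGroup E] [NormedSpace ℝ E]
    [NormedAddCommGroup F] [NormedSpace ℝ F] [CompleteSpace F]
    (f : E → F) (Lg : ℝ) (hLg : 0 ≤ Lg) (hdiff : Differentiable ℝ f)
    (hglip : LipschitzWith Lg.toNNReal (fderiv ℝ f)) (x y : E) :
    ‖f y - f x - fderiv ℝ f x (y - x)‖ ≤ Lg / 2 * ‖y - x‖ ^ 2 := by
  set Δ := y - x with hΔ
  have hpath : ∀ t : ℝ, HasDerivAt (fun t : ℝ => x + t • Δ) Δ t := by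
    intro t
    simpa using ((hasDerivAt_id t).smul_const Δ).const_add x
  have hderiv : ∀ t : ℝ, HasDerivAt
      (fun t : ℝ => f (x + t • Δ) - t • (fderiv ℝ f x Δ))
      (fderiv ℝ f (x + t • Δ) Δ - fderiv ℝ f x Δ) t := by
    intro t
    have h1 := ((hdiff (x + t • Δ)).hasFDerivAt.comp_hasDerivAt t (hpath t))
    have h2 : HasDerivAt (fun t : ℝ => t • (fderiv ℝ f x Δ)) (fderiv ℝ f x Δ) t := by
      simpa using (hasDerivAt_id t).smul_const (fderiv ℝ f x Δ)
    exact h1.sub h2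
  have hcont : Continuous fun t : ℝ => fderiv ℝ f (x + t • Δ) Δ - fderiv ℝ f x Δ :=
    ((hglip.continuous.comp (continuous_const.add (continuous_id.smul continuous_const))).clm_apply
      continuous_const).sub continuous_const
  have hint : (∫ t in (0:ℝ)..1, (fderiv ℝ f (x + t • Δ) Δ - fderiv ℝ f x Δ)) =
      (f (x + (1:ℝ) • Δ) - (1:ℝ) • (fderiv ℝ f x Δ)) - (f (x + (0:ℝ) • Δ) - (0:ℝ) • (fderiv ℝ f x Δ)) :=
    intervalIntegral.integral_eq_sub_of_hasDerivAt (fun t _ => hderiv t)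
      (hcont.intervalIntegrable 0 1)
  have heq : f y - f x - fderiv ℝ f x Δ =
      ∫ t in (0:ℝ)..1, (fderiv ℝ f (x + t • Δ) Δ - fderiv ℝ f x Δ) := by
    have h1 : x + (1:ℝ) • Δ = y := by rw [hΔ]; module
    have h0 : x + (0:ℝ) • Δ = x := by rw [hΔ]; module
    rw [hint, h1, h0]; simp only [one_smul, zero_smul, sub_zero]; abel
  rw [heq]
  have hbound : ∀ t ∈ Set.Ioc (0:ℝ) 1,
      ‖fderiv ℝ f (x + t • Δ) Δ - fderiv ℝ f x Δ‖ ≤ Lg * ‖Δ‖ ^ 2 * t := by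
    intro t ht
    have h1 : ‖fderiv ℝ f (x + t • Δ) Δ - fderiv ℝ f x Δ‖ ≤
        ‖fderiv ℝ f (x + t • Δ) - fderiv ℝ f x‖ * ‖Δ‖ := by
      simpa using (fderiv ℝ f (x + t • Δ) - fderiv ℝ f x).le_opNorm Δ
    have h2 : ‖fderiv ℝ f (x + t • Δ) - fderiv ℝ f x‖ ≤ Lg * (t * ‖Δ‖) := by
      have := hglip.dist_le_mul (x + t • Δ) x
      rw [dist_eq_norm, dist_eq_norm] at this
      calc ‖fderiv ℝ f (x + t • Δ) - fderiv ℝ f x‖ ≤ ↑Lg.toNNReal * ‖x + t • Δ - x‖ := this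
        _ = Lg * (t * ‖Δ‖) := by
            rw [Real.coe_toNNReal _ hLg]
            congr 1
            simp [norm_smul, abs_of_pos ht.1]
    calc ‖fderiv ℝ f (x + t • Δ) Δ - fderiv ℝ f x Δ‖ ≤ Lg * (t * ‖Δ‖) * ‖Δ‖ :=
        h1.trans (by exact mul_le_mul_of_nonneg_right h2 (norm_nonneg _))
      _ = Lg * ‖Δ‖ ^ 2 * t := by ring
  have hgint : IntervalIntegrable (fun t : ℝ => Lg * ‖Δ‖ ^ 2 * t) MeasureTheory.volume 0 1 :=
    (continuous_const.mul continuous_id).intervalIntegrable 0 1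
  have := intervalIntegral.norm_integral_le_abs_of_norm_le
    (f := fun t : ℝ => fderiv ℝ f (x + t • Δ) Δ - fderiv ℝ f x Δ)
    (g := fun t : ℝ => Lg * ‖Δ‖ ^ 2 * t) (μ := MeasureTheory.volume) (a := 0) (b := 1)
    ?_ hgint
  · refine this.trans ?_
    have : (∫ t in (0:ℝ)..1, Lg * ‖Δ‖ ^ 2 * t) = Lg / 2 * ‖Δ‖ ^ 2 := by
      rw [intervalIntegral.integral_const_mul, integral_id]; ring
    rw [this, abs_of_nonneg (by positivity)]
  · rw [Set.uIoc_of_le (by norm_num : (0:ℝ) ≤ 1)]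
    filter_upwards [MeasureTheory.ae_restrict_mem measurableSet_Ioc] with t ht
    exact hbound t ht


set_option maxHeartbeats 1000000 in
/-- Recursion for the inner-function estimation error of the linearized
moving-average update `u⁺ = (1-τ)u + τG + J(v⁺ - v)`:
`‖f(v⁺) - u⁺‖² ≤ (1-τ)‖f(v) - u‖² + τ²‖Δ_G‖² + [4L_f² + L_{∇f}‖f(v)-u‖ + ‖Δ_J‖²]‖v⁺-v‖² + r`,
where `Δ_G = f(v) - G`, `Δ_J = ∇f(v) - J`, `e = f(v⁺) - f(v) - ∇f(v)(v⁺-v)` and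
`r = 2τ⟨Δ_G, e + (1-τ)(f(v)-u) + Δ_J(v⁺-v)⟩ + 2⟨Δ_J(v⁺-v), e + (1-τ)(f(v)-u)⟩`. -/
theorem stmt14 {m n : ℕ}
    (f : EuclideanSpace ℝ (Fin m) → EuclideanSpace ℝ (Fin n))
    (Lf Lg : ℝ) (hLf : 0 ≤ Lf) (hLg : 0 ≤ Lg)
    (hdiff : Differentiable ℝ f)
    (hlip : LipschitzWith Lf.toNNReal f)
    (hglip : LipschitzWith Lg.toNNReal (fderiv ℝ f))
    (τ : ℝ) (hτ : τ ∈ Set.Ioc (0 : ℝ) 1)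
    (u G : EuclideanSpace ℝ (Fin n)) (v v' : EuclideanSpace ℝ (Fin m))
    (J : EuclideanSpace ℝ (Fin m) →L[ℝ] EuclideanSpace ℝ (Fin n)) :
    ‖f v' - ((1 - τ) • u + τ • G + J (v' - v))‖ ^ 2 ≤
      (1 - τ) * ‖f v - u‖ ^ 2 + τ ^ 2 * ‖f v - G‖ ^ 2
        + (4 * Lf ^ 2 + Lg * ‖f v - u‖ + ‖fderiv ℝ f v - J‖ ^ 2) * ‖v' - v‖ ^ 2
        + (2 * τ * ⟪f v - G,
              (f v' - f v - (fderiv ℝ f v) (v' - v)) + (1 - τ) • (f v - u)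
                + (fderiv ℝ f v - J) (v' - v)⟫
            + 2 * ⟪(fderiv ℝ f v - J) (v' - v),
                (f v' - f v - (fderiv ℝ f v) (v' - v)) + (1 - τ) • (f v - u)⟫) := by
  obtain ⟨hτ0, hτ1⟩ := hτ
  set Δv := v' - v with hΔv
  set D := f v - u with hD
  set DG := f v - G with hDG
  set E := f v' - f v - (fderiv ℝ f v) Δv with hE
  set W := (fderiv ℝ f v - J) Δv with hW
  have hid : f v' - ((1 - τ) • u + τ • G + J Δv) = (E + (1 - τ) • D + W) + τ • DG := by
    rw [hE, hD, hDG, hW, ContinuousLinearMap.sub_apply]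
    module
  have hE1 : ‖E‖ ≤ Lg / 2 * ‖Δv‖ ^ 2 := taylor_half f Lg hLg hdiff hglip v v'
  have hfd : ‖fderiv ℝ f v‖ ≤ Lf := by
    have := norm_fderiv_le_of_lipschitz ℝ hlip (x₀ := v)
    rwa [Real.coe_toNNReal _ hLf] at this
  have hE2 : ‖E‖ ≤ 2 * Lf * ‖Δv‖ := by
    have h1 : ‖f v' - f v‖ ≤ Lf * ‖Δv‖ := by
      have := hlip.dist_le_mul v' v
      rw [dist_eq_norm, dist_eq_norm, Real.coe_toNNReal _ hLf] at this
      rw [hΔv]; exact this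
    have h2 : ‖(fderiv ℝ f v) Δv‖ ≤ Lf * ‖Δv‖ :=
      ((fderiv ℝ f v).le_opNorm Δv).trans
        (mul_le_mul_of_nonneg_right hfd (norm_nonneg _))
    calc ‖E‖ ≤ ‖f v' - f v‖ + ‖(fderiv ℝ f v) Δv‖ := norm_sub_le _ _
      _ ≤ 2 * Lf * ‖Δv‖ := by linarith
  have hWb : ‖W‖ ≤ ‖fderiv ℝ f v - J‖ * ‖Δv‖ := (fderiv ℝ f v - J).le_opNorm Δv
  clear_value Δv D DG E W
  rw [hid]
  have e1 : ‖(E + (1 - τ) • D + W) + τ • DG‖ ^ 2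
      = ‖E + (1 - τ) • D + W‖ ^ 2 + 2 * τ * ⟪DG, E + (1 - τ) • D + W⟫ + τ ^ 2 * ‖DG‖ ^ 2 := by
    rw [norm_add_sq_real, real_inner_smul_right, real_inner_comm, norm_smul]
    rw [Real.norm_eq_abs, abs_of_pos hτ0]
    ring
  have e2 : ‖E + (1 - τ) • D + W‖ ^ 2
      = ‖E + (1 - τ) • D‖ ^ 2 + 2 * ⟪W, E + (1 - τ) • D⟫ + ‖W‖ ^ 2 := by
    rw [norm_add_sq_real, real_inner_comm]
  have e3 : ‖E + (1 - τ) • D‖ ^ 2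
      = ‖E‖ ^ 2 + 2 * (1 - τ) * ⟪E, D⟫ + (1 - τ) ^ 2 * ‖D‖ ^ 2 := by
    rw [norm_add_sq_real, real_inner_smul_right, norm_smul]
    rw [Real.norm_eq_abs, abs_of_nonneg (by linarith)]
    ring
  rw [e1, e2, e3]
  have hED : ⟪E, D⟫ ≤ ‖E‖ * ‖D‖ := real_inner_le_norm E D
  have hE0 : (0:ℝ) ≤ ‖E‖ := norm_nonneg _
  have hD0 : (0:ℝ) ≤ ‖D‖ := norm_nonneg _
  have hW0 : (0:ℝ) ≤ ‖W‖ := norm_nonneg _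
  have hΔv0 : (0:ℝ) ≤ ‖Δv‖ := norm_nonneg _
  have hE2sq : ‖E‖ ^ 2 ≤ 4 * Lf ^ 2 * ‖Δv‖ ^ 2 := by
    calc ‖E‖ ^ 2 ≤ (2 * Lf * ‖Δv‖) ^ 2 := pow_le_pow_left₀ hE0 hE2 2
      _ = 4 * Lf ^ 2 * ‖Δv‖ ^ 2 := by ring
  have hWsq : ‖W‖ ^ 2 ≤ ‖fderiv ℝ f v - J‖ ^ 2 * ‖Δv‖ ^ 2 := by
    calc ‖W‖ ^ 2 ≤ (‖fderiv ℝ f v - J‖ * ‖Δv‖) ^ 2 := pow_le_pow_left₀ hW0 hWb 2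
      _ = ‖fderiv ℝ f v - J‖ ^ 2 * ‖Δv‖ ^ 2 := by ring
  have hcross : 2 * (1 - τ) * ⟪E, D⟫ ≤ Lg * ‖D‖ * ‖Δv‖ ^ 2 := by
    have h1 : 2 * (1 - τ) * ⟪E, D⟫ ≤ 2 * (1 - τ) * (‖E‖ * ‖D‖) :=
      mul_le_mul_of_nonneg_left hED (by linarith)
    have h2 : 2 * (1 - τ) * (‖E‖ * ‖D‖) ≤ 2 * (‖E‖ * ‖D‖) := by
      nlinarith [mul_nonneg hE0 hD0]
    have h3 : 2 * (‖E‖ * ‖D‖) ≤ 2 * ((Lg / 2 * ‖Δv‖ ^ 2) * ‖D‖) := by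
      have := mul_le_mul_of_nonneg_right hE1 hD0
      linarith
    calc 2 * (1 - τ) * ⟪E, D⟫ ≤ 2 * (‖E‖ * ‖D‖) := h1.trans h2
      _ ≤ 2 * ((Lg / 2 * ‖Δv‖ ^ 2) * ‖D‖) := h3
      _ = Lg * ‖D‖ * ‖Δv‖ ^ 2 := by ring
  have hDsq : (1 - τ) ^ 2 * ‖D‖ ^ 2 ≤ (1 - τ) * ‖D‖ ^ 2 := by
    nlinarith [mul_nonneg (mul_nonneg (by linarith : (0:ℝ) ≤ 1 - τ) hτ0.le) (sq_nonneg ‖D‖)]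
  have hexp : (4 * Lf ^ 2 + Lg * ‖D‖ + ‖fderiv ℝ f v - J‖ ^ 2) * ‖Δv‖ ^ 2
      = 4 * Lf ^ 2 * ‖Δv‖ ^ 2 + Lg * ‖D‖ * ‖Δv‖ ^ 2 + ‖fderiv ℝ f v - J‖ ^ 2 * ‖Δv‖ ^ 2 := by
    ring
  rw [hexp]
  linarith [hE2sq, hWsq, hcross, hDsq]
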